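/- arXiv:0911.3827 — 6 statements merged into one kernel-verified Lean document; each statement's English description precedes it below -/
import Mathlib

section
/- If λ_{i,d} = i^{-β} for i = 1, …, d with 0 ≤ β < 3/4, then the strong ε-condition holds: d^{1/2} (∑_{i=1}^d λ_{i,d}²) / (∑_{i=1}^d λ_{i,d})² → 0 as d → ∞. -/
open Filter

/-- Polynomially decreasing eigenvalues `λ_{i,d} = i^{-β}` with `0 ≤ β < 3/4`
satisfy the strong ε-condition: `√d * ∑ λ² / (∑ λ)² → 0` as `d → ∞`. -/
theorem strong_eps_condition_poly (β : ℝ) (hβ0 : 0 ≤ β) (hβ : β < 3 / 4) :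
    Tendsto
      (fun d : ℕ =>
        Real.sqrt d * (∑ i ∈ Finset.Icc 1 d, ((i : ℝ) ^ (-β)) ^ 2) /
          (∑ i ∈ Finset.Icc 1 d, (i : ℝ) ^ (-β)) ^ 2)
      atTop (nhds 0) := by
  set s : ℝ := max (2 * β) (5 / 4) with hs
  have hs1 : (1 : ℝ) < s := lt_of_lt_of_le (by norm_num) (le_max_right _ _)
  have hs2β : 2 * β ≤ s := le_max_left _ _
  have hs32 : s < 3 / 2 := max_lt (by linarith) (by norm_num)
  have hsum : Summable (fun n : ℕ => (n : ℝ) ^ (-s)) := by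
    rw [Real.summable_nat_rpow]; linarith
  set C : ℝ := ∑' n : ℕ, (n : ℝ) ^ (-s) with hC
  have hC0 : 0 ≤ C := tsum_nonneg fun n => Real.rpow_nonneg (Nat.cast_nonneg n) _
  have key : ∀ d : ℕ, 1 ≤ d →
      Real.sqrt d * (∑ i ∈ Finset.Icc 1 d, ((i : ℝ) ^ (-β)) ^ 2) /
          (∑ i ∈ Finset.Icc 1 d, (i : ℝ) ^ (-β)) ^ 2
        ≤ C * (d : ℝ) ^ (s - 3 / 2) := by
    intro d hd
    have hd0 : (0 : ℝ) < d := by exact_mod_cast hd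
    -- lower bound on the denominator sum
    have h1 : (d : ℝ) ^ (1 - β) ≤ ∑ i ∈ Finset.Icc 1 d, (i : ℝ) ^ (-β) := by
      have : (d : ℝ) ^ (1 - β) = ∑ _i ∈ Finset.Icc 1 d, (d : ℝ) ^ (-β) := by
        rw [Finset.sum_const, Nat.card_Icc]
        simp only [Nat.add_sub_cancel, nsmul_eq_mul]
        rw [sub_eq_add_neg, Real.rpow_add hd0, Real.rpow_one]
      rw [this]
      refine Finset.sum_le_sum fun i hi => ?_
      rcases Finset.mem_Icc.mp hi with ⟨hi1, hi2⟩
      have hi0 : (0 : ℝ) < i := by exact_mod_cast hi1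
      exact Real.rpow_le_rpow_of_nonpos hi0 (by exact_mod_cast hi2) (by linarith)
    -- upper bound on the numerator sum
    have h2 : (∑ i ∈ Finset.Icc 1 d, ((i : ℝ) ^ (-β)) ^ 2)
        ≤ (d : ℝ) ^ (s - 2 * β) * C := by
      have step : ∀ i ∈ Finset.Icc 1 d,
          ((i : ℝ) ^ (-β)) ^ 2 ≤ (d : ℝ) ^ (s - 2 * β) * (i : ℝ) ^ (-s) := by
        intro i hi
        rcases Finset.mem_Icc.mp hi with ⟨hi1, hi2⟩
        have hi0 : (0 : ℝ) < i := by exact_mod_cast hi1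
        have e1 : ((i : ℝ) ^ (-β)) ^ 2 = (i : ℝ) ^ (s - 2 * β) * (i : ℝ) ^ (-s) := by
          rw [← Real.rpow_natCast ((i : ℝ) ^ (-β)) 2, ← Real.rpow_mul hi0.le,
            ← Real.rpow_add hi0]
          norm_num
          ring_nf
        rw [e1]
        have : (i : ℝ) ^ (s - 2 * β) ≤ (d : ℝ) ^ (s - 2 * β) :=
          Real.rpow_le_rpow hi0.le (by exact_mod_cast hi2) (by linarith)
        exact mul_le_mul_of_nonneg_right this (Real.rpow_nonneg hi0.le _)
      calc (∑ i ∈ Finset.Icc 1 d, ((i : ℝ) ^ (-β)) ^ 2)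
          ≤ ∑ i ∈ Finset.Icc 1 d, (d : ℝ) ^ (s - 2 * β) * (i : ℝ) ^ (-s) :=
            Finset.sum_le_sum step
        _ = (d : ℝ) ^ (s - 2 * β) * ∑ i ∈ Finset.Icc 1 d, (i : ℝ) ^ (-s) := by
            rw [Finset.mul_sum]
        _ ≤ (d : ℝ) ^ (s - 2 * β) * C := by
            refine mul_le_mul_of_nonneg_left ?_ (Real.rpow_nonneg hd0.le _)
            exact Summable.sum_le_tsum _ (fun i _ => Real.rpow_nonneg (Nat.cast_nonneg i) _) hsum
    have hden0 : (0 : ℝ) < ((d : ℝ) ^ (1 - β)) ^ 2 := by positivity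
    have hdenle : ((d : ℝ) ^ (1 - β)) ^ 2 ≤ (∑ i ∈ Finset.Icc 1 d, (i : ℝ) ^ (-β)) ^ 2 :=
      pow_le_pow_left₀ (Real.rpow_nonneg hd0.le _) h1 2
    have hnum : Real.sqrt d * (∑ i ∈ Finset.Icc 1 d, ((i : ℝ) ^ (-β)) ^ 2)
        ≤ Real.sqrt d * ((d : ℝ) ^ (s - 2 * β) * C) :=
      mul_le_mul_of_nonneg_left h2 (Real.sqrt_nonneg _)
    calc Real.sqrt d * (∑ i ∈ Finset.Icc 1 d, ((i : ℝ) ^ (-β)) ^ 2) /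
          (∑ i ∈ Finset.Icc 1 d, (i : ℝ) ^ (-β)) ^ 2
        ≤ Real.sqrt d * ((d : ℝ) ^ (s - 2 * β) * C) / ((d : ℝ) ^ (1 - β)) ^ 2 :=
          div_le_div₀ (by positivity) hnum hden0 hdenle
      _ = C * (d : ℝ) ^ (s - 3 / 2) := by
          rw [Real.sqrt_eq_rpow, ← Real.rpow_natCast ((d : ℝ) ^ (1 - β)) 2,
            ← Real.rpow_mul hd0.le]
          rw [show (d : ℝ) ^ (1 / 2 : ℝ) * ((d : ℝ) ^ (s - 2 * β) * C) /
              (d : ℝ) ^ ((1 - β) * (2 : ℕ)) =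
              C * ((d : ℝ) ^ (1 / 2 : ℝ) * (d : ℝ) ^ (s - 2 * β) /
              (d : ℝ) ^ ((1 - β) * (2 : ℕ))) by ring]
          rw [← Real.rpow_add hd0, ← Real.rpow_sub hd0]
          norm_num
          ring_nf
          tauto
    -- done
  have hg : Tendsto (fun d : ℕ => C * (d : ℝ) ^ (s - 3 / 2)) atTop (nhds 0) := by
    have h0 : Tendsto (fun d : ℕ => (d : ℝ) ^ (s - 3 / 2)) atTop (nhds 0) := by
      have := (tendsto_rpow_neg_atTop (by linarith : (0 : ℝ) < 3 / 2 - s)).comp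
        tendsto_natCast_atTop_atTop (α := ℕ)
      simpa [Function.comp_def, neg_sub] using this
    simpa using h0.const_mul C
  refine squeeze_zero' ?_ ?_ hg
  · filter_upwards [eventually_ge_atTop 1] with d _
    positivity
  · filter_upwards [eventually_ge_atTop 1] with d hd
    exact key d hd
end

section
/- In the spiked model with λ_{1,d} = … = λ_{m,d} = C₁ d^α and λ_{m+1,d} = … = λ_{d,d} = C₂, where m = ⌊d^β⌋, 0 < β < 1, C₁, C₂ > 0, and 0 ≤ 2α + β < 3/2, the strong ε-condition holds: d^{1/2} ∑_{i=1}^d λ_{i,d}² / (∑_{i=1}^d λ_{i,d})² → 0 as d → ∞. -/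
open Filter

lemma sumIte (A B : ℝ) (m d : ℕ) (h : m ≤ d) :
    ∑ i ∈ Finset.Icc 1 d, (if i ≤ m then A else B) = m * A + ((d - m : ℕ) : ℝ) * B := by
  rw [Finset.sum_ite]
  have h1 : (Finset.Icc 1 d).filter (fun i => i ≤ m) = Finset.Icc 1 m := by
    ext i; simp only [Finset.mem_filter, Finset.mem_Icc]; omega
  have h2 : (Finset.Icc 1 d).filter (fun i => ¬ i ≤ m) = Finset.Icc (m+1) d := by
    ext i; simp only [Finset.mem_filter, Finset.mem_Icc]; omega
  rw [h1, h2]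
  simp [Nat.card_Icc, mul_comm]

-- key real inequality
lemma keyIneq (α β C₁ C₂ : ℝ) (hα : 0 ≤ α) (hC₁ : 0 < C₁) (hC₂ : 0 < C₂)
    (x m' : ℝ) (hx : 1 ≤ x) (hm0 : 0 ≤ m') (hm : m' ≤ x ^ β) (hm2 : x / 2 ≤ x - m') :
    Real.sqrt x * (m' * (C₁ * x ^ α) ^ 2 + (x - m') * C₂ ^ 2) /
        (m' * (C₁ * x ^ α) + (x - m') * C₂) ^ 2 ≤
      4 * C₁ ^ 2 / C₂ ^ 2 * x ^ (2 * α + β - 3 / 2) + 4 * x ^ (-(1/2) : ℝ) := by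
  have hx0 : (0:ℝ) < x := lt_of_lt_of_le one_pos hx
  have hxα : (0:ℝ) < x ^ α := Real.rpow_pos_of_pos hx0 α
  have hS : x / 2 * C₂ ≤ m' * (C₁ * x ^ α) + (x - m') * C₂ := by
    have : x / 2 * C₂ ≤ (x - m') * C₂ := by
      apply mul_le_mul_of_nonneg_right hm2 hC₂.le
    nlinarith [mul_nonneg hm0 (mul_pos hC₁ hxα).le]
  have hSpos : (0:ℝ) < m' * (C₁ * x ^ α) + (x - m') * C₂ := by
    have : (0:ℝ) < x / 2 * C₂ := by positivity
    linarith
  have hsq : (x / 2 * C₂) ^ 2 ≤ (m' * (C₁ * x ^ α) + (x - m') * C₂) ^ 2 := by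
    apply pow_le_pow_left₀ (by positivity) hS
  -- numerator bound
  have hnum : Real.sqrt x * (m' * (C₁ * x ^ α) ^ 2 + (x - m') * C₂ ^ 2) ≤
      Real.sqrt x * (x ^ β * (C₁ * x ^ α) ^ 2 + x * C₂ ^ 2) := by
    apply mul_le_mul_of_nonneg_left _ (Real.sqrt_nonneg x)
    have h1 : m' * (C₁ * x ^ α) ^ 2 ≤ x ^ β * (C₁ * x ^ α) ^ 2 := by
      apply mul_le_mul_of_nonneg_right hm (by positivity)
    have h2 : (x - m') * C₂ ^ 2 ≤ x * C₂ ^ 2 := by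
      apply mul_le_mul_of_nonneg_right (by linarith) (by positivity)
    linarith
  calc Real.sqrt x * (m' * (C₁ * x ^ α) ^ 2 + (x - m') * C₂ ^ 2) /
        (m' * (C₁ * x ^ α) + (x - m') * C₂) ^ 2
      ≤ Real.sqrt x * (x ^ β * (C₁ * x ^ α) ^ 2 + x * C₂ ^ 2) / (x / 2 * C₂) ^ 2 := by
        apply div_le_div₀ (by positivity) hnum (by positivity) hsq
    _ = 4 * C₁ ^ 2 / C₂ ^ 2 * x ^ (2 * α + β - 3 / 2) + 4 * x ^ (-(1/2) : ℝ) := by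
        rw [Real.sqrt_eq_rpow]
        have e1 : (x ^ α) ^ 2 = x ^ (2 * α) := by
          rw [← Real.rpow_natCast (x ^ α) 2, ← Real.rpow_mul hx0.le]; norm_num [mul_comm]
        have e2 : x ^ (2 * α + β - 3 / 2) = x ^ ((1:ℝ)/2) * x ^ β * x ^ (2 * α) / x ^ 2 := by
          rw [← Real.rpow_add hx0, ← Real.rpow_add hx0, ← Real.rpow_natCast x 2,
            ← Real.rpow_sub hx0]
          congr 1; ring
        have e3 : x ^ (-(1/2) : ℝ) = x ^ ((1:ℝ)/2) / x := by
          rw [show (-(1/2):ℝ) = 1/2 - 1 by norm_num, Real.rpow_sub hx0, Real.rpow_one]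
        rw [mul_pow, e1, e2, e3]
        have hx' : x ≠ 0 := ne_of_gt hx0
        field_simp
        ring

/-- Spiked model with an increasing number of spikes: the first `m = ⌊d^β⌋`
eigenvalues equal `C₁ d^α` and the remaining `d - m` equal `C₂`.  If
`0 ≤ 2α + β < 3/2` then the strong ε-condition holds:
`√d * ∑ λ² / (∑ λ)² → 0` as `d → ∞`. -/
theorem strong_eps_condition_spiked (α β C₁ C₂ : ℝ)
    (hα : 0 ≤ α) (hβ0 : 0 < β) (hβ1 : β < 1)
    (hC₁ : 0 < C₁) (hC₂ : 0 < C₂)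
    (hcond : 2 * α + β < 3 / 2)
    (lam : ℕ → ℕ → ℝ)
    (hlam : ∀ d : ℕ, ∀ i ∈ Finset.Icc 1 d,
      lam d i = if i ≤ ⌊(d : ℝ) ^ β⌋₊ then C₁ * (d : ℝ) ^ α else C₂) :
    Tendsto
      (fun d : ℕ =>
        Real.sqrt d * (∑ i ∈ Finset.Icc 1 d, (lam d i) ^ 2) /
          (∑ i ∈ Finset.Icc 1 d, lam d i) ^ 2)
      atTop (nhds 0) := by
  have hg : Tendsto (fun d : ℕ =>
      4 * C₁ ^ 2 / C₂ ^ 2 * (d:ℝ) ^ (2 * α + β - 3 / 2) + 4 * (d:ℝ) ^ (-(1/2) : ℝ))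
      atTop (nhds 0) := by
    have t1 : Tendsto (fun d : ℕ => (d:ℝ) ^ (2 * α + β - 3 / 2)) atTop (nhds 0) := by
      have := (tendsto_rpow_neg_atTop (show (0:ℝ) < 3/2 - (2*α+β) by linarith)).comp
        tendsto_natCast_atTop_atTop (α := ℕ)
      simpa [Function.comp_def, show -(3/2-(2*α+β)) = 2*α+β-3/2 by ring] using this
    have t2 : Tendsto (fun d : ℕ => (d:ℝ) ^ (-(1/2) : ℝ)) atTop (nhds 0) := by
      have := (tendsto_rpow_neg_atTop (show (0:ℝ) < 1/2 by norm_num)).comp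
        tendsto_natCast_atTop_atTop (α := ℕ)
      simpa [Function.comp_def] using this
    simpa using (t1.const_mul (4 * C₁ ^ 2 / C₂ ^ 2)).add (t2.const_mul 4)
  have hb : ∀ᶠ d : ℕ in atTop, (d:ℝ) ^ β ≤ (d:ℝ) / 2 := by
    have hβ' : Tendsto (fun d : ℕ => (d:ℝ) ^ (β - 1)) atTop (nhds 0) := by
      have := (tendsto_rpow_neg_atTop (show (0:ℝ) < 1 - β by linarith)).comp
        tendsto_natCast_atTop_atTop (α := ℕ)
      simpa [Function.comp_def, show -(1-β) = β-1 by ring] using this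
    filter_upwards [hβ'.eventually (eventually_lt_nhds (show (0:ℝ) < 1/2 by norm_num)),
      eventually_ge_atTop 1] with d h1 h2
    have hd0 : (0:ℝ) < d := by exact_mod_cast Nat.lt_of_lt_of_le Nat.zero_lt_one h2
    rw [show β = (β - 1) + 1 by ring, Real.rpow_add hd0, Real.rpow_one]
    nlinarith [h1, hd0]
  apply squeeze_zero' _ _ hg
  · filter_upwards with d
    have h1 : 0 ≤ ∑ i ∈ Finset.Icc 1 d, (lam d i) ^ 2 :=
      Finset.sum_nonneg fun i _ => sq_nonneg _
    positivity
  · filter_upwards [hb, eventually_ge_atTop 1] with d hbd hd1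
    set m := ⌊(d:ℝ) ^ β⌋₊ with hm_def
    have hx1 : (1:ℝ) ≤ d := by exact_mod_cast hd1
    have hd0 : (0:ℝ) < d := by linarith
    have hmβ : (m:ℝ) ≤ (d:ℝ) ^ β := Nat.floor_le (by positivity)
    have hmd : (m:ℝ) ≤ (d:ℝ) := le_trans hmβ (le_trans hbd (by linarith))
    have hmd' : m ≤ d := by exact_mod_cast hmd
    have hs1 : ∑ i ∈ Finset.Icc 1 d, lam d i
        = (m:ℝ) * (C₁ * (d:ℝ) ^ α) + ((d - m : ℕ) : ℝ) * C₂ := by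
      rw [Finset.sum_congr rfl (fun i hi => hlam d i hi)]
      exact sumIte _ _ _ _ hmd'
    have hs2 : ∑ i ∈ Finset.Icc 1 d, (lam d i) ^ 2
        = (m:ℝ) * (C₁ * (d:ℝ) ^ α) ^ 2 + ((d - m : ℕ) : ℝ) * C₂ ^ 2 := by
      have : ∀ i ∈ Finset.Icc 1 d, (lam d i) ^ 2
          = if i ≤ m then (C₁ * (d:ℝ) ^ α) ^ 2 else C₂ ^ 2 := by
        intro i hi
        rw [hlam d i hi, apply_ite (· ^ 2)]
      rw [Finset.sum_congr rfl this]
      exact sumIte _ _ _ _ hmd'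
    have hcast : ((d - m : ℕ) : ℝ) = (d:ℝ) - m := by
      push_cast [Nat.cast_sub hmd']; ring
    rw [hs1, hs2, hcast]
    exact keyIneq α β C₁ C₂ hα hC₁ hC₂ (d:ℝ) (m:ℝ) hx1 (Nat.cast_nonneg m) hmβ
      (by linarith)
end

section
/- Weyl's lower bound: if A and B are m×m real symmetric matrices, then φ_j(A) + φ_{k-j+m}(B) ≤ φ_k(A+B) for all indices with k ≤ j and k - j + m ≤ m, where φ_i denotes the i-th largest eigenvalue. -/
open Matrix Submodule

local notation "⟪" x ", " y "⟫" => @inner ℝ _ _ x y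

/-- If `c ≤ μ l` on `S` and `x` lies in the span of the orthonormal eigenvectors `b l`, `l ∈ S`,
with `A *ᵥ b l = μ l • b l`, then `c‖x‖² ≤ ⟪x, Ax⟫`. -/
lemma rayleigh_gen {m : ℕ} (A : Matrix (Fin m) (Fin m) ℝ) (hA : Aᵀ = A)
    (b : OrthonormalBasis (Fin m) ℝ (EuclideanSpace ℝ (Fin m)))
    (μ : Fin m → ℝ) (hb : ∀ l, A *ᵥ (b l) = μ l • (b l))
    (S : Set (Fin m)) (c : ℝ) (hc : ∀ l ∈ S, c ≤ μ l)
    (x : EuclideanSpace ℝ (Fin m)) (hx : x ∈ Submodule.span ℝ (⇑b '' S)) :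
    c * ‖x‖ ^ 2 ≤ ⟪x, (WithLp.toLp 2 (A *ᵥ x : Fin m → ℝ) : EuclideanSpace ℝ (Fin m))⟫ := by
  have hzero : ∀ l ∉ S, b.repr x l = 0 := by
    intro l hl
    induction hx using Submodule.span_induction with
    | mem y hy =>
      obtain ⟨l', hl', rfl⟩ := hy
      have : l' ≠ l := fun h => hl (h ▸ hl')
      simp [OrthonormalBasis.repr_self, EuclideanSpace.single_apply, this.symm]
    | zero => simp
    | add y z _ _ hy hz => simp [hy, hz]
    | smul a y _ hy => simp [hy]
  have hinner : ∀ u v : EuclideanSpace ℝ (Fin m), ⟪u, v⟫ = ∑ l, u l * v l := by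
    intro u v
    simp [PiLp.inner_apply]
    exact Finset.sum_congr rfl fun _ _ => mul_comm _ _
  have hrepr : ∀ l, b.repr (WithLp.toLp 2 (A *ᵥ x : Fin m → ℝ) : EuclideanSpace ℝ (Fin m)) l
      = μ l * b.repr x l := by
    intro l
    rw [OrthonormalBasis.repr_apply_apply, OrthonormalBasis.repr_apply_apply, hinner, hinner]
    have : ∀ i, ((WithLp.toLp 2 (A *ᵥ x : Fin m → ℝ) : EuclideanSpace ℝ (Fin m)) i) = (A *ᵥ x) i :=
      fun _ => rfl
    calc ∑ i, (b l) i * (WithLp.toLp 2 (A *ᵥ x : Fin m → ℝ) : EuclideanSpace ℝ (Fin m)) i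
        = (b l) ⬝ᵥ (A *ᵥ x) := rfl
      _ = (Aᵀ *ᵥ (b l)) ⬝ᵥ x := by rw [Matrix.dotProduct_mulVec, Matrix.mulVec_transpose]
      _ = (μ l • (b l : Fin m → ℝ)) ⬝ᵥ x := by rw [hA, hb l]
      _ = μ l * ∑ i, (b l) i * x i := by
          rw [Finset.mul_sum]
          refine Finset.sum_congr rfl fun i _ => ?_
          show μ l * (b l) i * x i = μ l * ((b l) i * x i)
          ring
  have key : ∀ v : EuclideanSpace ℝ (Fin m),
      ⟪x, v⟫ = ∑ l, b.repr x l * b.repr v l := by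
    intro v
    rw [← b.repr.inner_map_map x v, hinner]
  have hxv : ⟪x, (WithLp.toLp 2 (A *ᵥ x : Fin m → ℝ) : EuclideanSpace ℝ (Fin m))⟫
      = ∑ l, μ l * (b.repr x l) ^ 2 := by
    rw [key]
    exact Finset.sum_congr rfl fun l _ => by rw [hrepr]; ring
  have hnorm : ‖x‖ ^ 2 = ∑ l, (b.repr x l) ^ 2 := by
    rw [← real_inner_self_eq_norm_sq, key]
    exact Finset.sum_congr rfl fun l _ => by ring
  rw [hxv, hnorm, Finset.mul_sum]
  refine Finset.sum_le_sum fun l _ => ?_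
  by_cases hl : l ∈ S
  · exact mul_le_mul_of_nonneg_right (hc l hl) (sq_nonneg _)
  · simp [hzero l hl]

lemma finrank_span_onb {m : ℕ} (b : OrthonormalBasis (Fin m) ℝ (EuclideanSpace ℝ (Fin m)))
    (S : Set (Fin m)) [Fintype S] [DecidablePred (· ∈ S)] :
    Module.finrank ℝ (Submodule.span ℝ (⇑b '' S)) = S.toFinset.card := by
  have li : LinearIndependent ℝ (fun l : S => b l) :=
    b.orthonormal.linearIndependent.comp _ Subtype.val_injective
  have : ⇑b '' S = Set.range (fun l : S => b l) := (Set.image_eq_range _ _)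
  rw [this, finrank_span_eq_card li, ← Set.toFinset_card]

lemma mulVec_sortedBasis {m : ℕ} {M : Matrix (Fin m) (Fin m) ℝ} (hM : M.IsHermitian)
    (l : Fin m) :
    M *ᵥ ((hM.eigenvectorBasis.reindex (Tuple.sort hM.eigenvalues).symm) l)
      = ((hM.eigenvalues ∘ Tuple.sort hM.eigenvalues) l : ℝ)
          • ((hM.eigenvectorBasis.reindex (Tuple.sort hM.eigenvalues).symm) l : Fin m → ℝ) := by
  rw [OrthonormalBasis.reindex_apply]
  simpa using hM.mulVec_eigenvectorBasis ((Tuple.sort hM.eigenvalues) l)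

lemma transpose_of_herm {m : ℕ} {M : Matrix (Fin m) (Fin m) ℝ} (hM : M.IsHermitian) :
    Mᵀ = M := by
  have := hM
  rw [Matrix.IsHermitian, Matrix.conjTranspose] at this
  exact (Matrix.conjTranspose_eq_transpose_of_trivial M).symm.trans hM


/-- The `i`-th largest eigenvalue (0-indexed: `i = 0` gives the largest)
of a real symmetric matrix, counted with multiplicity. -/
noncomputable def ithLargestEig {m : ℕ} {A : Matrix (Fin m) (Fin m) ℝ}
    (hA : A.IsHermitian) (i : Fin m) : ℝ :=
  (hA.eigenvalues ∘ Tuple.sort hA.eigenvalues) i.rev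

/-- Weyl's inequality (lower bound): for real symmetric `m × m` matrices
`A`, `B` and indices `k ≤ j` (0-indexed),
`φ_j(A) + φ_{m-1-(j-k)}(B) ≤ φ_k(A + B)`. -/
theorem weyl_lower (m : ℕ) (A B : Matrix (Fin m) (Fin m) ℝ)
    (hA : A.IsHermitian) (hB : B.IsHermitian)
    (k j : Fin m) (hkj : k ≤ j) :
    ithLargestEig hA j +
        ithLargestEig hB
          ⟨m - 1 - (j.val - k.val), by have := j.isLt; omega⟩ ≤
      ithLargestEig (hA.add hB) k := by
  classical
  have hC : (A + B).IsHermitian := hA.add hB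
  set i : Fin m := ⟨m - 1 - (j.val - k.val), by have := j.isLt; omega⟩ with hi
  set μA := hA.eigenvalues ∘ Tuple.sort hA.eigenvalues with hμA
  set μB := hB.eigenvalues ∘ Tuple.sort hB.eigenvalues with hμB
  set μC := hC.eigenvalues ∘ Tuple.sort hC.eigenvalues with hμC
  have monA : Monotone μA := Tuple.monotone_sort _
  have monB : Monotone μB := Tuple.monotone_sort _
  have monC : Monotone μC := Tuple.monotone_sort _
  set bA := hA.eigenvectorBasis.reindex (Tuple.sort hA.eigenvalues).symm with hbA
  set bB := hB.eigenvectorBasis.reindex (Tuple.sort hB.eigenvalues).symm with hbB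
  set bC := hC.eigenvectorBasis.reindex (Tuple.sort hC.eigenvalues).symm with hbC
  set U := Submodule.span ℝ (⇑bA '' Set.Ici j.rev) with hU
  set V := Submodule.span ℝ (⇑bB '' Set.Ici i.rev) with hV
  set W := Submodule.span ℝ (⇑bC '' Set.Iic k.rev) with hW
  -- dimensions
  have dimU : Module.finrank ℝ U = m - j.rev.val := by
    rw [hU, finrank_span_onb, Set.toFinset_Ici, Fin.card_Ici]
  have dimV : Module.finrank ℝ V = m - i.rev.val := by
    rw [hV, finrank_span_onb, Set.toFinset_Ici, Fin.card_Ici]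
  have dimW : Module.finrank ℝ W = k.rev.val + 1 := by
    rw [hW, finrank_span_onb, Set.toFinset_Iic, Fin.card_Iic]
  have dimE : Module.finrank ℝ (EuclideanSpace ℝ (Fin m)) = m := by simp
  have hsum1 : Module.finrank ℝ U + Module.finrank ℝ V
      ≤ Module.finrank ℝ (U ⊓ V : Submodule ℝ _) + m := by
    rw [← Submodule.finrank_sup_add_finrank_inf_eq U V, add_comm]
    exact add_le_add_right (le_trans (Submodule.finrank_le _) dimE.le) _
  have hsum2 : Module.finrank ℝ (U ⊓ V : Submodule ℝ _) + Module.finrank ℝ W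
      ≤ Module.finrank ℝ (U ⊓ V ⊓ W : Submodule ℝ _) + m := by
    rw [← Submodule.finrank_sup_add_finrank_inf_eq (U ⊓ V) W, add_comm]
    exact add_le_add_right (le_trans (Submodule.finrank_le _) dimE.le) _
  have hrev_j : j.rev.val = m - 1 - j.val := by
    rw [Fin.val_rev]; omega
  have hrev_i : i.rev.val = j.val - k.val := by
    rw [Fin.val_rev]; have := j.isLt; have := k.isLt; simp [hi]; omega
  have hrev_k : k.rev.val = m - 1 - k.val := by
    rw [Fin.val_rev]; omega
  have hpos : 0 < Module.finrank ℝ (U ⊓ V ⊓ W : Submodule ℝ _) := by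
    have hj := j.isLt; have hk := k.isLt
    omega
  obtain ⟨x, hx, hx0⟩ : ∃ x, x ∈ U ⊓ V ⊓ W ∧ x ≠ 0 := by
    apply Submodule.exists_mem_ne_zero_of_ne_bot
    intro hbot
    rw [hbot, finrank_bot] at hpos
    exact lt_irrefl 0 hpos
  obtain ⟨⟨hxU, hxV⟩, hxW⟩ := hx
  have hnx : (0 : ℝ) < ‖x‖ ^ 2 := by
    have : ‖x‖ ≠ 0 := fun h => hx0 (norm_eq_zero.mp h)
    positivity
  -- Rayleigh bounds
  have hRA : μA j.rev * ‖x‖ ^ 2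
      ≤ @inner ℝ _ _ x (WithLp.toLp 2 (A *ᵥ x : Fin m → ℝ) : EuclideanSpace ℝ (Fin m)) := by
    refine rayleigh_gen A (transpose_of_herm hA) bA μA
      (fun l => mulVec_sortedBasis hA l) (Set.Ici j.rev) _ (fun l hl => monA hl) x hxU
  have hRB : μB i.rev * ‖x‖ ^ 2
      ≤ @inner ℝ _ _ x (WithLp.toLp 2 (B *ᵥ x : Fin m → ℝ) : EuclideanSpace ℝ (Fin m)) := by
    refine rayleigh_gen B (transpose_of_herm hB) bB μB
      (fun l => mulVec_sortedBasis hB l) (Set.Ici i.rev) _ (fun l hl => monB hl) x hxV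
  have hRC : @inner ℝ _ _ x (WithLp.toLp 2 ((A + B) *ᵥ x : Fin m → ℝ) : EuclideanSpace ℝ (Fin m))
      ≤ μC k.rev * ‖x‖ ^ 2 := by
    have hneg : ∀ l, (-(A + B)) *ᵥ (bC l) = (-μC) l • (bC l : Fin m → ℝ) := by
      intro l
      rw [Matrix.neg_mulVec, mulVec_sortedBasis hC l, ← neg_smul]
      rfl
    have := rayleigh_gen (-(A + B)) (by rw [Matrix.transpose_neg, transpose_of_herm hC])
      bC (-μC) hneg (Set.Iic k.rev) (-μC k.rev)
      (fun l hl => neg_le_neg (monC hl)) x hxW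
    have heq : @inner ℝ _ _ x (WithLp.toLp 2 ((-(A + B)) *ᵥ x : Fin m → ℝ) : EuclideanSpace ℝ (Fin m))
        = -(@inner ℝ _ _ x (WithLp.toLp 2 ((A + B) *ᵥ x : Fin m → ℝ) : EuclideanSpace ℝ (Fin m))) := by
      rw [Matrix.neg_mulVec, WithLp.toLp_neg]
      exact inner_neg_right _ _
    rw [heq] at this
    linarith
  have hsplit : @inner ℝ _ _ x (WithLp.toLp 2 ((A + B) *ᵥ x : Fin m → ℝ) : EuclideanSpace ℝ (Fin m))
      = @inner ℝ _ _ x (WithLp.toLp 2 (A *ᵥ x : Fin m → ℝ) : EuclideanSpace ℝ (Fin m))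
        + @inner ℝ _ _ x (WithLp.toLp 2 (B *ᵥ x : Fin m → ℝ) : EuclideanSpace ℝ (Fin m)) := by
    rw [Matrix.add_mulVec, WithLp.toLp_add]
    exact inner_add_right _ _ _
  have hfinal : (μA j.rev + μB i.rev) * ‖x‖ ^ 2 ≤ μC k.rev * ‖x‖ ^ 2 := by
    rw [add_mul]
    linarith
  have := le_of_mul_le_mul_right hfinal hnx
  simpa [ithLargestEig, hμA, hμB, hμC, hi] using this
end

section
/- Suppose ρ : ℕ → [0,1] satisfies ρ(i) → 0 as i → ∞, and for each d the nonnegative weights λ̃_{1,d}, …, λ̃_{d,d} satisfy ∑_{i=1}^d λ̃_{i,d} = 1 and ∑_{i=1}^d λ̃_{i,d}² → 0 as d → ∞. Then for any family of permutations π*_d of {1,…,d}, ∑_{i=1}^d λ̃_{π*_d(i),d} ρ(i) → 0 as d → ∞. -/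
open Filter

/-- Lemma 2: if `ρ : ℕ → [0,1]` tends to 0 and for each `d` the nonnegative
weights `λ̃_{i,d}` sum to 1 with `∑ λ̃² → 0`, then for any family of
permutations `π*_d` of `{1,…,d}`, `∑_i λ̃_{π*_d(i),d} ρ(i) → 0`. -/
theorem weighted_mixing_sum_tendsto_zero
    (ρ : ℕ → ℝ) (hρmem : ∀ i, ρ i ∈ Set.Icc (0 : ℝ) 1)
    (hρ : Tendsto ρ atTop (nhds 0))
    (lam : (d : ℕ) → Fin d → ℝ)
    (hnn : ∀ d i, 0 ≤ lam d i)
    (hsum : ∀ d : ℕ, 0 < d → ∑ i, lam d i = 1)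
    (hsq : Tendsto (fun d : ℕ => ∑ i, (lam d i) ^ 2) atTop (nhds 0))
    (π : (d : ℕ) → Equiv.Perm (Fin d)) :
    Tendsto (fun d : ℕ => ∑ i : Fin d, lam d (π d i) * ρ i.val)
      atTop (nhds 0) := by
  classical
  have hρnn : ∀ i, 0 ≤ ρ i := fun i => (hρmem i).1
  have hρle : ∀ i, ρ i ≤ 1 := fun i => (hρmem i).2
  rw [Metric.tendsto_atTop] at hρ hsq ⊢
  intro ε hε
  obtain ⟨N, hN⟩ := hρ (ε / 2) (by positivity)
  have hδ : 0 < ε / (2 * (N + 1)) := by positivity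
  obtain ⟨D, hD⟩ := hsq ((ε / (2 * (N + 1))) ^ 2) (by positivity)
  refine ⟨max D 1, fun d hd => ?_⟩
  have hd1 : 0 < d := le_trans (le_max_right _ _) hd
  have hdD : D ≤ d := le_trans (le_max_left _ _) hd
  have hS : ∑ i, (lam d i) ^ 2 < (ε / (2 * (N + 1))) ^ 2 := by
    have := hD d hdD
    rwa [Real.dist_eq, sub_zero,
      abs_of_nonneg (Finset.sum_nonneg fun i _ => sq_nonneg _)] at this
  have hlam_le : ∀ j : Fin d, lam d j ≤ ε / (2 * (N + 1)) := by
    intro j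
    have h1 : (lam d j) ^ 2 ≤ ∑ i, (lam d i) ^ 2 :=
      Finset.single_le_sum (f := fun i => (lam d i) ^ 2)
        (fun i _ => sq_nonneg _) (Finset.mem_univ j)
    nlinarith [hnn d j, hδ]
  have hρsmall : ∀ i : ℕ, N ≤ i → ρ i ≤ ε / 2 := by
    intro i hi
    have := hN i hi
    rw [Real.dist_eq, sub_zero, abs_of_nonneg (hρnn i)] at this
    linarith
  rw [Real.dist_eq, sub_zero,
    abs_of_nonneg (Finset.sum_nonneg fun i _ => mul_nonneg (hnn d _) (hρnn _))]
  have hsplit :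
      (∑ i : Fin d, lam d (π d i) * ρ i.val) =
        (∑ i ∈ Finset.univ.filter (fun i : Fin d => (i : ℕ) < N),
            lam d (π d i) * ρ i.val) +
        (∑ i ∈ Finset.univ.filter (fun i : Fin d => ¬ (i : ℕ) < N),
            lam d (π d i) * ρ i.val) :=
    (Finset.sum_filter_add_sum_filter_not _ _ _).symm
  rw [hsplit]
  -- first sum
  have hcard : (Finset.univ.filter (fun i : Fin d => (i : ℕ) < N)).card ≤ N := by
    have : (Finset.univ.filter (fun i : Fin d => (i : ℕ) < N)).card ≤
        (Finset.range N).card := by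
      exact Finset.card_le_card_of_injOn (fun i => (i : ℕ))
        (fun i hi => by
          simp only [Finset.mem_coe, Finset.mem_filter] at hi
          exact Finset.mem_range.mpr hi.2)
        (fun a _ b _ hab => Fin.val_injective hab)
    simpa using this
  have h1 : (∑ i ∈ Finset.univ.filter (fun i : Fin d => (i : ℕ) < N),
      lam d (π d i) * ρ i.val) < ε / 2 := by
    have hb : (∑ i ∈ Finset.univ.filter (fun i : Fin d => (i : ℕ) < N),
        lam d (π d i) * ρ i.val) ≤
        (Finset.univ.filter (fun i : Fin d => (i : ℕ) < N)).card •
          (ε / (2 * (N + 1))) := by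
      apply Finset.sum_le_card_nsmul
      intro i _
      calc lam d (π d i) * ρ i.val ≤ lam d (π d i) * 1 :=
            mul_le_mul_of_nonneg_left (hρle _) (hnn d _)
        _ = lam d (π d i) := mul_one _
        _ ≤ ε / (2 * (N + 1)) := hlam_le _
    have hc : ((Finset.univ.filter (fun i : Fin d => (i : ℕ) < N)).card : ℝ) *
        (ε / (2 * (N + 1))) ≤ (N : ℝ) * (ε / (2 * (N + 1))) := by
      apply mul_le_mul_of_nonneg_right _ hδ.le
      exact_mod_cast hcard
    have hlt : (N : ℝ) * (ε / (2 * (N + 1))) < ε / 2 := by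
      have hstep : (N : ℝ) * (ε / (2 * (N + 1))) <
          ((N : ℝ) + 1) * (ε / (2 * (N + 1))) :=
        mul_lt_mul_of_pos_right (by linarith) hδ
      have heq : ((N : ℝ) + 1) * (ε / (2 * (N + 1))) = ε / 2 := by
        have hN1 : ((N : ℝ) + 1) ≠ 0 := by positivity
        field_simp
      linarith
    calc (∑ i ∈ Finset.univ.filter (fun i : Fin d => (i : ℕ) < N),
        lam d (π d i) * ρ i.val) ≤ _ := hb
      _ = ((Finset.univ.filter (fun i : Fin d => (i : ℕ) < N)).card : ℝ) *
          (ε / (2 * (N + 1))) := by rw [nsmul_eq_mul]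
      _ ≤ (N : ℝ) * (ε / (2 * (N + 1))) := hc
      _ < ε / 2 := hlt
  -- second sum
  have hperm : (∑ i : Fin d, lam d (π d i)) = 1 := by
    rw [Equiv.sum_comp (π d) (lam d)]
    exact hsum d hd1
  have h2 : (∑ i ∈ Finset.univ.filter (fun i : Fin d => ¬ (i : ℕ) < N),
      lam d (π d i) * ρ i.val) ≤ ε / 2 := by
    calc (∑ i ∈ Finset.univ.filter (fun i : Fin d => ¬ (i : ℕ) < N),
        lam d (π d i) * ρ i.val)
        ≤ ∑ i ∈ Finset.univ.filter (fun i : Fin d => ¬ (i : ℕ) < N),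
            lam d (π d i) * (ε / 2) := by
          apply Finset.sum_le_sum
          intro i hi
          simp only [Finset.mem_filter, not_lt] at hi
          exact mul_le_mul_of_nonneg_left (hρsmall i hi.2) (hnn d _)
      _ ≤ ∑ i : Fin d, lam d (π d i) * (ε / 2) := by
          apply Finset.sum_le_sum_of_subset_of_nonneg (Finset.filter_subset _ _)
          intro i _ _
          exact mul_nonneg (hnn d _) (by positivity)
      _ = (∑ i : Fin d, lam d (π d i)) * (ε / 2) := by
          rw [Finset.sum_mul]
      _ = ε / 2 := by rw [hperm, one_mul]
  linarith
end

section
/- Let P be a d×d orthogonal matrix and C = diag(c_1,…,c_d) with distinct positive entries c_1 > c_2 > … > c_d. If the upper-left k×k block relation holds in the sense that ‖Pᵀ C P − C‖_F is small, then for each m ≠ 1, (c_1 − c_m)² P_{m1}² ≤ ‖Pᵀ C P − C‖_F²; in particular, if P_n is a sequence of orthogonal matrices with ‖P_nᵀ C P_n − C‖_F → 0, then (P_n)_{ii}² → 1 for all i. -/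
open Matrix Filter

/-- Squared Frobenius norm of a real square matrix. -/
noncomputable def frobSq {d : ℕ} (M : Matrix (Fin d) (Fin d) ℝ) : ℝ :=
  ∑ i : Fin d, ∑ j : Fin d, (M i j) ^ 2

lemma frobSq_nonneg {d : ℕ} (M : Matrix (Fin d) (Fin d) ℝ) : 0 ≤ frobSq M := by
  unfold frobSq; positivity

lemma sq_le_frobSq {d : ℕ} (M : Matrix (Fin d) (Fin d) ℝ) (m j : Fin d) :
    (M m j) ^ 2 ≤ frobSq M := by
  unfold frobSq
  calc (M m j) ^ 2 ≤ ∑ l : Fin d, (M m l) ^ 2 := by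
        apply Finset.single_le_sum (fun l _ => by positivity) (Finset.mem_univ j)
    _ ≤ ∑ i : Fin d, ∑ l : Fin d, (M i l) ^ 2 := by
        apply Finset.single_le_sum (fun i _ => by positivity) (Finset.mem_univ m)

lemma frobSq_eq_trace {d : ℕ} (M : Matrix (Fin d) (Fin d) ℝ) :
    frobSq M = Matrix.trace (M.transpose * M) := by
  unfold frobSq
  rw [Matrix.trace]
  simp only [Matrix.diag, Matrix.mul_apply, Matrix.transpose_apply]
  rw [Finset.sum_comm]
  congr 1; ext i; congr 1; ext j; ring

lemma frobSq_orth {d : ℕ} (P M : Matrix (Fin d) (Fin d) ℝ)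
    (hP : P.transpose * P = 1) : frobSq (P.transpose * M) = frobSq M := by
  have hPPt : P * P.transpose = 1 := mul_eq_one_comm.mpr hP
  rw [frobSq_eq_trace, frobSq_eq_trace, Matrix.transpose_mul,
    Matrix.transpose_transpose, Matrix.mul_assoc, ← Matrix.mul_assoc P, hPPt,
    Matrix.one_mul]

lemma entry_bound {d : ℕ} (c : Fin d → ℝ) (P : Matrix (Fin d) (Fin d) ℝ)
    (hP : P.transpose * P = 1) (m j : Fin d) :
    (c m - c j) ^ 2 * (P m j) ^ 2 ≤
      frobSq (P.transpose * Matrix.diagonal c * P - Matrix.diagonal c) := by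
  have hM : P.transpose * Matrix.diagonal c * P - Matrix.diagonal c
      = P.transpose * (Matrix.diagonal c * P - P * Matrix.diagonal c) := by
    rw [Matrix.mul_sub, ← Matrix.mul_assoc, ← Matrix.mul_assoc, hP, Matrix.one_mul,
      Matrix.mul_assoc]
  rw [hM, frobSq_orth P _ hP]
  have hentry : (Matrix.diagonal c * P - P * Matrix.diagonal c) m j
      = (c m - c j) * P m j := by
    simp [Matrix.sub_apply, Matrix.diagonal_mul, Matrix.mul_diagonal]; ring
  calc (c m - c j) ^ 2 * (P m j) ^ 2
      = ((Matrix.diagonal c * P - P * Matrix.diagonal c) m j) ^ 2 := by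
        rw [hentry]; ring
    _ ≤ _ := sq_le_frobSq _ m j

/-- Let `C = diag(c)` with distinct positive entries `c_0 > c_1 > … > c_{d-1}`.
For any orthogonal `P` and `m ≠ 0`, `(c_0 - c_m)² P_{m0}² ≤ ‖Pᵀ C P - C‖_F²`;
consequently, for a sequence of orthogonal matrices `P_n` with
`‖P_nᵀ C P_n - C‖_F → 0`, the squared diagonal entries `(P_n)_{ii}²` tend
to 1 for every `i`. -/
theorem orthogonal_near_diag (d : ℕ) (hd : 0 < d)
    (c : Fin d → ℝ) (hpos : ∀ i, 0 < c i)
    (hstrict : ∀ i j : Fin d, i < j → c j < c i) :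
    (∀ P : Matrix (Fin d) (Fin d) ℝ, P.transpose * P = 1 →
      ∀ m : Fin d, m ≠ ⟨0, hd⟩ →
        (c ⟨0, hd⟩ - c m) ^ 2 * (P m ⟨0, hd⟩) ^ 2 ≤
          frobSq (P.transpose * Matrix.diagonal c * P - Matrix.diagonal c)) ∧
    (∀ Pseq : ℕ → Matrix (Fin d) (Fin d) ℝ,
      (∀ n, (Pseq n).transpose * Pseq n = 1) →
      Tendsto (fun n => Real.sqrt
          (frobSq ((Pseq n).transpose * Matrix.diagonal c * Pseq n -
            Matrix.diagonal c)))
        atTop (nhds 0) →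
      ∀ i : Fin d,
        Tendsto (fun n => (Pseq n i i) ^ 2) atTop (nhds 1)) := by
  constructor
  · intro P hP m hm
    have := entry_bound c P hP m ⟨0, hd⟩
    calc (c ⟨0, hd⟩ - c m) ^ 2 * (P m ⟨0, hd⟩) ^ 2
        = (c m - c ⟨0, hd⟩) ^ 2 * (P m ⟨0, hd⟩) ^ 2 := by ring
      _ ≤ _ := this
  · intro Pseq hPseq htend i
    set f : ℕ → ℝ := fun n =>
      frobSq ((Pseq n).transpose * Matrix.diagonal c * Pseq n - Matrix.diagonal c)
      with hf
    have hfnn : ∀ n, 0 ≤ f n := fun n => frobSq_nonneg _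
    have hftend : Tendsto f atTop (nhds 0) := by
      have h2 : Tendsto (fun n => Real.sqrt (f n) ^ 2) atTop (nhds (0 ^ 2)) :=
        htend.pow 2
      simpa [Real.sq_sqrt (hfnn _)] using h2
    -- each off-diagonal square in column i tends to 0
    have hoff : ∀ m : Fin d, m ≠ i →
        Tendsto (fun n => (Pseq n m i) ^ 2) atTop (nhds 0) := by
      intro m hm
      have hc : c m ≠ c i := by
        rcases lt_trichotomy m i with h | h | h
        · exact ne_of_gt (hstrict m i h)
        · exact absurd h hm
        · exact ne_of_lt (hstrict i m h)
      have hcpos : 0 < (c m - c i) ^ 2 := by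
        have : c m - c i ≠ 0 := sub_ne_zero.mpr hc
        positivity
      have hub : ∀ n, (Pseq n m i) ^ 2 ≤ f n / (c m - c i) ^ 2 := by
        intro n
        have := entry_bound c (Pseq n) (hPseq n) m i
        rw [le_div_iff₀ hcpos]
        linarith [this]
      exact squeeze_zero (fun n => by positivity) hub
        (by simpa using hftend.div_const ((c m - c i) ^ 2))
    -- column normalization
    have hcol : ∀ n, (Pseq n i i) ^ 2
        = 1 - ∑ m ∈ Finset.univ.erase i, (Pseq n m i) ^ 2 := by
      intro n
      have h1 : ((Pseq n).transpose * Pseq n) i i = 1 := by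
        rw [hPseq n]; simp
      rw [Matrix.mul_apply] at h1
      simp only [Matrix.transpose_apply] at h1
      have h2 : ∑ m : Fin d, (Pseq n m i) ^ 2 = 1 := by
        rw [← h1]; congr 1; ext m; ring
      rw [← Finset.add_sum_erase Finset.univ _ (Finset.mem_univ i)] at h2
      linarith
    have hsum : Tendsto
        (fun n => ∑ m ∈ Finset.univ.erase i, (Pseq n m i) ^ 2) atTop (nhds 0) := by
      have := tendsto_finset_sum (Finset.univ.erase i)
        (fun m hm => hoff m (Finset.ne_of_mem_erase hm))
      simpa using this
    have : Tendsto
        (fun n => 1 - ∑ m ∈ Finset.univ.erase i, (Pseq n m i) ^ 2) atTop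
        (nhds (1 - 0)) := tendsto_const_nhds.sub hsum
    simp only [sub_zero] at this
    exact this.congr (fun n => (hcol n).symm)
end

section
/- If P is a d×d orthogonal matrix and C = diag(c_1,…,c_d) with c_i > 0, then ‖Pᵀ C P − C‖_F² ≥ ∑_{j=1}^d (c_1 − c_j)² P_{j1}². -/
open Matrix

/-- If `P` is orthogonal and `C = diag(c)` with positive entries, then the
squared Frobenius norm of `Pᵀ C P - C` dominates
`∑_j (c_0 - c_j)² P_{j0}²` (indices 0-based; `0` plays the role of the
first column). -/
theorem frobenius_lower_bound (d : ℕ) (hd : 0 < d)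
    (P : Matrix (Fin d) (Fin d) ℝ) (hP : P.transpose * P = 1)
    (c : Fin d → ℝ) (hc : ∀ i, 0 < c i) :
    ∑ j : Fin d,
      (c ⟨0, hd⟩ - c j) ^ 2 * (P j ⟨0, hd⟩) ^ 2 ≤
      ∑ i : Fin d, ∑ j : Fin d,
        ((P.transpose * Matrix.diagonal c * P - Matrix.diagonal c) i j) ^ 2 := by
  set e0 : Fin d := ⟨0, hd⟩ with he0
  set M := P.transpose * Matrix.diagonal c * P - Matrix.diagonal c with hM
  have hPPt : P * P.transpose = 1 := mul_eq_one_comm.mp hP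
  set v : Fin d → ℝ := fun k => (c k - c e0) * P k e0 with hv
  have horth : ∀ i j : Fin d, ∑ k, P k i * P k j = if i = j then 1 else 0 := by
    intro i j
    have := congrFun (congrFun hP i) j
    simpa [Matrix.mul_apply, Matrix.transpose_apply, Matrix.one_apply] using this
  have horth' : ∀ k l : Fin d, ∑ i, P k i * P l i = if k = l then 1 else 0 := by
    intro k l
    have := congrFun (congrFun hPPt k) l
    simpa [Matrix.mul_apply, Matrix.transpose_apply, Matrix.one_apply] using this
  have key : ∀ i, M i e0 = ∑ k, P k i * v k := by
    intro i
    have h1 : M i e0 = (∑ k, P k i * (c k * P k e0)) - (if i = e0 then c i else 0) := by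
      simp only [hM, Matrix.sub_apply, Matrix.mul_apply, Matrix.mul_diagonal,
        Matrix.transpose_apply, Matrix.diagonal_apply]
      congr 1
      apply Finset.sum_congr rfl
      intro k _
      simp [mul_ite, Finset.sum_ite_eq']
      ring
    rw [h1]
    have h2 : ∑ k, P k i * v k
        = (∑ k, P k i * (c k * P k e0)) - c e0 * ∑ k, P k i * P k e0 := by
      rw [Finset.mul_sum, ← Finset.sum_sub_distrib]
      apply Finset.sum_congr rfl
      intro k _
      simp [hv]; ring
    rw [h2, horth i e0]
    rcases eq_or_ne i e0 with h | h
    · subst h; simp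
    · simp [h]
  have key2 : ∑ i, (M i e0) ^ 2 = ∑ k, v k ^ 2 := by
    calc ∑ i, (M i e0) ^ 2 = ∑ i, ∑ k, ∑ l, (v k * v l) * (P k i * P l i) := by
          apply Finset.sum_congr rfl
          intro i _
          rw [key i, sq, Finset.sum_mul_sum]
          apply Finset.sum_congr rfl; intro k _
          apply Finset.sum_congr rfl; intro l _
          ring
      _ = ∑ k, ∑ l, (v k * v l) * ∑ i, P k i * P l i := by
          rw [Finset.sum_comm]
          apply Finset.sum_congr rfl
          intro k _
          rw [Finset.sum_comm]
          apply Finset.sum_congr rfl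
          intro l _
          rw [Finset.mul_sum]
      _ = ∑ k, v k ^ 2 := by
          apply Finset.sum_congr rfl
          intro k _
          rw [Finset.sum_eq_single k]
          · rw [horth' k k]; simp [sq]
          · intro l _ hl
            rw [horth' k l]
            simp [Ne.symm hl]
          · simp
  have hLHS : ∑ j : Fin d, (c e0 - c j) ^ 2 * (P j e0) ^ 2 = ∑ k, v k ^ 2 := by
    apply Finset.sum_congr rfl
    intro k _
    simp [hv]; ring
  rw [hLHS, ← key2]
  apply Finset.sum_le_sum
  intro i _
  exact Finset.single_le_sum (fun j _ => sq_nonneg (M i j)) (Finset.mem_univ e0)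
end
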